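/- If the fundamental tensor F satisfies the defining condition of class F₇, then the torsion tensor T² of the second natural connection satisfies T²(x,y,z) = η(x)T²(ξ,y,z) − η(y)T²(ξ,x,z) + T²(x,y,ξ)η(z), T²(ξ,y,z) = −T²(ξ,z,y) = T²(ξ,φy,φz), and T²(y,z,ξ) = T²(φy,φz,ξ) for all x, y, z ∈ V. -/
import Mathlib


open scoped RealInnerProductSpace

noncomputable section

variable {V : Type*} [NormedAddCommGroup V] [InnerProductSpace ℝ V]

/-- A Riemannian Π-structure on a real inner product space `V`:
a linear map `phi`, a vector `xi` (with dual form `η x = ⟪x, xi⟫`) satisfying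
the defining algebraic identities. -/
structure PiStruct (V : Type*) [NormedAddCommGroup V] [InnerProductSpace ℝ V] where
  phi : V →ₗ[ℝ] V
  xi : V
  phi_xi : phi xi = 0
  phi_phi : ∀ x : V, phi (phi x) = x - (⟪x, xi⟫ : ℝ) • xi
  eta_phi : ∀ x : V, ⟪phi x, xi⟫ = 0
  eta_xi : ⟪xi, xi⟫ = (1 : ℝ)
  g_phi_phi : ∀ x y : V, ⟪phi x, phi y⟫ = ⟪x, y⟫ - ⟪x, xi⟫ * ⟪y, xi⟫
  g_phi_symm : ∀ x y : V, ⟪phi x, y⟫ = ⟪x, phi y⟫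

/-- Trilinear real-valued maps on `V`. -/
abbrev Tri (V : Type*) [NormedAddCommGroup V] [InnerProductSpace ℝ V] :=
  V →ₗ[ℝ] V →ₗ[ℝ] V →ₗ[ℝ] ℝ

/-- The 1-form `η(x) = g(x, ξ)`. -/
def PiStruct.eta (P : PiStruct V) (x : V) : ℝ := ⟪x, P.xi⟫

/-- `F` is a fundamental tensor for the Π-structure `P`. -/
def IsFund (P : PiStruct V) (F : Tri V) : Prop :=
  (∀ x y z : V, F x y z = F x z y) ∧
  (∀ x y z : V, F x y z =
    -F x (P.phi y) (P.phi z) + P.eta y * F x P.xi z + P.eta z * F x y P.xi)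

/-- The Nijenhuis tensor of `F`. -/
def Nij (P : PiStruct V) (F : Tri V) (x y z : V) : ℝ :=
  F (P.phi x) y z - F (P.phi y) x z - F x y (P.phi z) + F y x (P.phi z)
    + P.eta z * (F x (P.phi y) P.xi - F y (P.phi x) P.xi)

/-- The potential of the first natural connection. -/
def Q1 (P : PiStruct V) (F : Tri V) (x y z : V) : ℝ :=
  -(1/2) * F x (P.phi y) z - (1/2) * P.eta z * F x (P.phi y) P.xi
    + P.eta y * F x (P.phi z) P.xi

/-- The potential of the second natural connection. -/
def Q2 (P : PiStruct V) (F : Tri V) (x y z : V) : ℝ :=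
  Q1 P F x y z - (1/8) * (Nij P F (P.phi (P.phi z)) (P.phi (P.phi y)) (P.phi (P.phi x))
    + 2 * P.eta x * Nij P F (P.phi z) (P.phi y) P.xi)

/-- The torsion tensor of the first natural connection. -/
def T1 (P : PiStruct V) (F : Tri V) (x y z : V) : ℝ :=
  -(1/2) * (F x (P.phi y) z - F y (P.phi x) z)
    - (1/2) * P.eta z * (F x (P.phi y) P.xi - F y (P.phi x) P.xi)
    + P.eta y * F x (P.phi z) P.xi - P.eta x * F y (P.phi z) P.xi

/-- The torsion tensor of the second natural connection. -/
def T2 (P : PiStruct V) (F : Tri V) (x y z : V) : ℝ :=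
  Q2 P F x y z - Q2 P F y x z

/-- Identity (*) for a torsion-like tensor `T`. -/
def StarId (P : PiStruct V) (T : V → V → V → ℝ) : Prop :=
  ∀ x y z : V,
    T x y z + T y z x + T (P.phi x) y (P.phi z) + T y (P.phi z) (P.phi x)
    - P.eta x * (T P.xi y z + T y z P.xi - P.eta y * T P.xi z P.xi)
    - P.eta y * (T x P.xi z + T P.xi z x + T (P.phi x) P.xi (P.phi z)
        + T P.xi (P.phi z) (P.phi x))
    - P.eta z * (T x y P.xi + T y P.xi x - P.eta y * T x P.xi P.xi) = 0

/-- The defining condition of the basic class F₇. -/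
def ClassF7 (P : PiStruct V) (F : Tri V) : Prop :=
  (∀ x y z : V, F x y z = F x y P.xi * P.eta z + F x z P.xi * P.eta y) ∧
  (∀ x y : V, F x y P.xi = -F y x P.xi) ∧
  (∀ x y : V, F x y P.xi = F (P.phi x) (P.phi y) P.xi)

section Helpers

variable (P : PiStruct V) (F : Tri V)

lemma etaphi (x : V) : P.eta (P.phi x) = 0 := P.eta_phi x

lemma etaxi : P.eta P.xi = 1 := P.eta_xi

lemma hAxi (h7 : ClassF7 P F) (y : V) : F P.xi y P.xi = 0 := by
  have := h7.2.2 P.xi y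
  rw [P.phi_xi] at this
  simpa using this

lemma hAxi' (h7 : ClassF7 P F) (x : V) : F x P.xi P.xi = 0 := by
  rw [h7.2.1, hAxi P F h7, neg_zero]

lemma hAphi (h7 : ClassF7 P F) (x y : V) :
    F x (P.phi y) P.xi = F (P.phi x) y P.xi := by
  rw [h7.2.2 x (P.phi y), P.phi_phi y, map_sub, map_smul]
  simp [hAxi' P F h7]

lemma Nij_eq (h7 : ClassF7 P F) (x y z : V) :
    Nij P F x y z = 4 * P.eta z * F (P.phi x) y P.xi := by
  unfold Nij
  rw [h7.1 (P.phi x) y z, h7.1 (P.phi y) x z, h7.1 x y (P.phi z), h7.1 y x (P.phi z)]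
  simp only [etaphi, mul_zero, zero_mul, add_zero]
  rw [hAphi P F h7 x y, hAphi P F h7 x z, hAphi P F h7 y z, hAphi P F h7 y x,
    h7.2.1 (P.phi y) x, hAphi P F h7 x y]
  ring

lemma T2_eq (h7 : ClassF7 P F) (x y z : V) :
    T2 P F x y z = -2 * P.eta z * F x (P.phi y) P.xi := by
  unfold T2 Q2 Q1
  rw [Nij_eq P F h7 (P.phi (P.phi z)) (P.phi (P.phi y)) (P.phi (P.phi x)),
    Nij_eq P F h7 (P.phi (P.phi z)) (P.phi (P.phi x)) (P.phi (P.phi y)),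
    Nij_eq P F h7 (P.phi z) (P.phi y) P.xi,
    Nij_eq P F h7 (P.phi z) (P.phi x) P.xi,
    h7.1 x (P.phi y) z, h7.1 y (P.phi x) z]
  simp only [etaphi, etaxi, mul_zero, zero_mul, add_zero, mul_one]
  have hzz : ∀ a b : V, F (P.phi (P.phi a)) (P.phi b) P.xi = F (P.phi a) b P.xi := by
    intro a b
    rw [P.phi_phi a, map_sub, map_smul]
    simp only [LinearMap.sub_apply, LinearMap.smul_apply, smul_eq_mul]
    rw [hAxi P F h7, hAphi P F h7 a b]
    ring
  rw [hzz z y, hzz z x, hAphi P F h7 x z, hAphi P F h7 y z,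
    h7.2.1 y (P.phi x), hAphi P F h7 x y, h7.2.1 (P.phi z) x, hAphi P F h7 x z,
    h7.2.1 (P.phi z) y, hAphi P F h7 y z]
  ring

end Helpers

/-- characterisation of the torsion `T²` in the class F₇. -/
theorem classF7_T2_properties
    [FiniteDimensional ℝ V] (n : ℕ) (hn : 1 ≤ n)
    (hdim : Module.finrank ℝ V = 2 * n + 1)
    (P : PiStruct V) (F : Tri V) (hF : IsFund P F)
    (h7 : ClassF7 P F) :
    (∀ x y z : V, T2 P F x y z =
      P.eta x * T2 P F P.xi y z - P.eta y * T2 P F P.xi x z + T2 P F x y P.xi * P.eta z) ∧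
    (∀ y z : V, T2 P F P.xi y z = -T2 P F P.xi z y) ∧
    (∀ y z : V, T2 P F P.xi y z = T2 P F P.xi (P.phi y) (P.phi z)) ∧
    (∀ y z : V, T2 P F y z P.xi = T2 P F (P.phi y) (P.phi z) P.xi) := by
  have hT := T2_eq P F h7
  have hAx := hAxi P F h7
  refine ⟨?_, ?_, ?_, ?_⟩
  · intro x y z
    simp only [hT, etaxi, hAx, etaphi]
    ring
  · intro y z
    simp only [hT, hAx]
    ring
  · intro y z
    simp only [hT, hAx]
    ring
  · intro y z
    simp only [hT, etaxi]
    rw [hAphi P F h7 (P.phi y) (P.phi z)]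
    rw [P.phi_phi y, map_sub, map_smul]
    simp only [LinearMap.sub_apply, LinearMap.smul_apply, smul_eq_mul, hAx]
    ring
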